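/- Define ρ(a,b,c) = ξ_a(b)/ξ_a(c) for 0 ≤ a < 1 and ρ(1,b,c) = (1-b)/(1-c), where ξ_a(t) = ζ_t(t) - ζ_t(a) and ζ_t(s) = s + (1-t)ln(1-s). If 0 ≤ a < c < b ≤ 1, then ρ(a,b,c) > (b-a)/(c-a); if 0 ≤ c < b < a < 1, then ρ(a,b,c) < (a-b)/(a-c). -/

import Mathlib

noncomputable def zeta (t s : ℝ) : ℝ := s + (1 - t) * Real.log (1 - s)
noncomputable def xi (s t : ℝ) : ℝ := zeta t t - zeta t s
noncomputable def rho (a b c : ℝ) : ℝ := if a < 1 then xi a b / xi a c else (1 - b) / (1 - c)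

open Real Set

lemma xi_eq (a t : ℝ) :
    xi a t = t + (1 - t) * Real.log (1 - t) - (a + (1 - t) * Real.log (1 - a)) := by
  simp [xi, zeta]

lemma hasDerivAt_xi (a : ℝ) {t : ℝ} (ht : t < 1) :
    HasDerivAt (xi a) (Real.log (1 - a) - Real.log (1 - t)) t := by
  have h1 : HasDerivAt (fun t : ℝ => 1 - t) (-1) t := by
    simpa using (hasDerivAt_id t).const_sub 1
  have hlog : HasDerivAt (fun t : ℝ => Real.log (1 - t)) (-1 / (1 - t)) t := by
    simpa using h1.log (by linarith)
  have hg : HasDerivAt (fun t : ℝ => (1 - t) * Real.log (1 - t))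
      (-Real.log (1 - t) - 1) t := by
    have h := h1.mul hlog
    have hne : (1:ℝ) - t ≠ 0 := by linarith
    convert h using 1
    · rfl
    · rfl
    · rfl
    rw [mul_div_assoc', mul_div_right_comm, div_self hne]
    ring
  have hc : HasDerivAt (fun t : ℝ => (1 - t) * Real.log (1 - a)) (-Real.log (1 - a)) t := by
    simpa using h1.mul_const (Real.log (1 - a))
  have h2 : HasDerivAt
      (fun t : ℝ => t + (1 - t) * Real.log (1 - t) - (a + (1 - t) * Real.log (1 - a)))
      (1 + (-Real.log (1 - t) - 1) - (0 + -Real.log (1 - a))) t :=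
    ((hasDerivAt_id t).add hg).sub ((hasDerivAt_const t a).add hc)
  have heq : xi a = fun t => t + (1 - t) * Real.log (1 - t) - (a + (1 - t) * Real.log (1 - a)) := by
    funext t; exact xi_eq a t
  rw [heq]
  convert h2 using 1
  ring

lemma contOn_xi (a : ℝ) : ContinuousOn (xi a) (Set.Iio 1) := fun t ht =>
  ((hasDerivAt_xi a ht).differentiableAt.continuousAt).continuousWithinAt

lemma deriv_xi (a : ℝ) {t : ℝ} (ht : t < 1) :
    deriv (xi a) t = Real.log (1 - a) - Real.log (1 - t) :=
  (hasDerivAt_xi a ht).deriv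

lemma strictConvex_xi (a : ℝ) : StrictConvexOn ℝ (Set.Iio 1) (xi a) := by
  apply StrictMonoOn.strictConvexOn_of_deriv (convex_Iio 1) (contOn_xi a)
  rw [interior_Iio]
  intro x hx y hy hxy
  rw [deriv_xi a hx, deriv_xi a hy]
  have hx1 : (0:ℝ) < 1 - x := by simp at hx; linarith
  have hy1 : (0:ℝ) < 1 - y := by simp at hy; linarith
  have : Real.log (1 - y) < Real.log (1 - x) := Real.log_lt_log hy1 (by linarith)
  linarith

lemma xi_self (a : ℝ) : xi a a = 0 := by simp [xi]

lemma xi_pos_of_gt (a : ℝ) {t : ℝ} (ha : a < t) (ht : t < 1) : 0 < xi a t := by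
  have hmono : StrictMonoOn (xi a) (Set.Ico a 1) := by
    apply strictMonoOn_of_deriv_pos (convex_Ico a 1)
    · exact (contOn_xi a).mono (fun x hx => hx.2)
    · rw [interior_Ico]
      intro x hx
      rw [deriv_xi a hx.2]
      have : Real.log (1 - x) < Real.log (1 - a) :=
        Real.log_lt_log (by linarith [hx.2]) (by linarith [hx.1])
      linarith
  have := hmono ⟨le_refl a, lt_trans ha ht⟩ ⟨ha.le, ht⟩ ha
  rwa [xi_self] at this

lemma xi_pos_of_lt (a : ℝ) {t : ℝ} (ha : t < a) (h1 : a < 1) : 0 < xi a t := by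
  have hmono : StrictAntiOn (xi a) (Set.Iic a) := by
    apply strictAntiOn_of_deriv_neg (convex_Iic a)
    · exact (contOn_xi a).mono (fun x hx => lt_of_le_of_lt hx h1)
    · rw [interior_Iic]
      intro x hx
      rw [deriv_xi a (lt_trans hx h1)]
      have : Real.log (1 - a) < Real.log (1 - x) :=
        Real.log_lt_log (by linarith) (by linarith [Set.mem_Iio.mp hx])
      linarith
  have := hmono (le_of_lt ha) (Set.mem_Iic.mpr le_rfl) ha
  rwa [xi_self] at this

theorem stmt6 (a b c : ℝ) :
    (0 ≤ a → a < c → c < b → b ≤ 1 → rho a b c > (b - a) / (c - a)) ∧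
    (0 ≤ c → c < b → b < a → a < 1 → rho a b c < (a - b) / (a - c)) := by
  constructor
  · intro ha0 hac hcb hb1
    have ha1 : a < 1 := by linarith
    have hc1 : c < 1 := by linarith
    rw [rho, if_pos ha1]
    have hFc : 0 < xi a c := xi_pos_of_gt a hac hc1
    have hca : 0 < c - a := by linarith
    have hba : 0 < b - a := by linarith
    rcases eq_or_lt_of_le hb1 with hb1 | hb1
    · -- b = 1
      subst hb1
      have hxi1 : xi a 1 = 1 - a := by simp [xi, zeta]
      rw [hxi1]
      have hFclt : xi a c < c - a := by
        have hlog : Real.log (1 - c) < Real.log (1 - a) :=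
          Real.log_lt_log (by linarith) (by linarith)
        have h1c : (0:ℝ) < 1 - c := by linarith
        rw [xi_eq]
        nlinarith
      rw [gt_iff_lt, div_lt_div_iff₀ hca hFc]
      nlinarith
    · -- b < 1
      have hsec := (strictConvex_xi a).secant_strict_mono (Set.mem_Iio.mpr ha1)
        (Set.mem_Iio.mpr hc1) (Set.mem_Iio.mpr hb1) (ne_of_gt hac) (by linarith) hcb
      rw [xi_self, sub_zero, sub_zero] at hsec
      rw [gt_iff_lt, div_lt_div_iff₀ hca hFc]
      rw [div_lt_div_iff₀ hca hba] at hsec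
      nlinarith
  · intro hc0 hcb hba ha1
    rw [rho, if_pos ha1]
    have hFc : 0 < xi a c := xi_pos_of_lt a (by linarith) ha1
    have hFb : 0 < xi a b := xi_pos_of_lt a hba ha1
    have hac : 0 < a - c := by linarith
    have hab : 0 < a - b := by linarith
    have hsec := (strictConvex_xi a).secant_strict_mono (Set.mem_Iio.mpr ha1)
      (Set.mem_Iio.mpr (by linarith : c < 1)) (Set.mem_Iio.mpr (by linarith : b < 1))
      (ne_of_lt (by linarith)) (ne_of_lt hba) hcb
    rw [xi_self, sub_zero, sub_zero] at hsec
    rw [div_lt_div_iff₀ hFc hac]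
    rw [show c - a = -(a - c) by ring, show b - a = -(a - b) by ring, div_neg, div_neg,
      neg_lt_neg_iff, div_lt_div_iff₀ hab hac] at hsec
    nlinarith
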